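/- Let G be a finitely generated nilpotent group with generators g_1, …, g_n, and let H be a subgroup of G such that g_i^{r_i} ∈ H for some positive π-numbers r_i (i = 1, …, n). Then every element of G has some positive π-power lying in H, and the index [G : H] is a finite π-number. -/

import Mathlib

open scoped Pointwise commutatorElement

def IsPiNumber (π : Set ℕ) (n : ℕ) : Prop :=
  0 < n ∧ ∀ p : ℕ, p.Prime → p ∣ n → p ∈ π

namespace PiAux

theorem pi_one (π : Set ℕ) : IsPiNumber π 1 :=
  ⟨Nat.one_pos, fun p hp hd => absurd (Nat.le_of_dvd Nat.one_pos hd)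
    (by have := hp.one_lt; omega)⟩

theorem pi_mul {π : Set ℕ} {a b : ℕ} (ha : IsPiNumber π a) (hb : IsPiNumber π b) :
    IsPiNumber π (a * b) :=
  ⟨Nat.mul_pos ha.1 hb.1, fun p hp hd => ((Nat.Prime.dvd_mul hp).mp hd).elim (ha.2 p hp) (hb.2 p hp)⟩

theorem abelian_case {A : Type*} [CommGroup A] (π : Set ℕ) (B : Subgroup A)
    (T : Set A) (hT : T.Finite)
    (hpow : ∀ t ∈ T, ∃ m : ℕ, IsPiNumber π m ∧ t ^ m ∈ B)
    (hgen : Subgroup.closure (T ∪ B) = ⊤) :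
    (∀ x : A, ∃ m : ℕ, IsPiNumber π m ∧ x ^ m ∈ B) ∧ IsPiNumber π B.index := by
  have part1 : ∀ x : A, ∃ m : ℕ, IsPiNumber π m ∧ x ^ m ∈ B := by
    let S : Subgroup A :=
      { carrier := {x | ∃ m : ℕ, IsPiNumber π m ∧ x ^ m ∈ B}
        one_mem' := ⟨1, pi_one π, by simpa using B.one_mem⟩
        mul_mem' := by
          rintro x y ⟨m, hm, hxm⟩ ⟨k, hk, hyk⟩
          refine ⟨m * k, pi_mul hm hk, ?_⟩
          rw [mul_pow, pow_mul, mul_comm m k, pow_mul]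
          exact mul_mem (Subgroup.pow_mem B hxm k) (Subgroup.pow_mem B hyk m)
        inv_mem' := by
          rintro x ⟨m, hm, hxm⟩
          exact ⟨m, hm, by rw [inv_pow]; exact inv_mem hxm⟩ }
    intro x
    have : x ∈ S := by
      have hle : Subgroup.closure (T ∪ B) ≤ S := by
        rw [Subgroup.closure_le]
        rintro t (ht | htB)
        · exact hpow t ht
        · exact ⟨1, pi_one π, by simpa using htB⟩
      have := hgen ▸ hle
      exact this (Subgroup.mem_top x)
    exact this
  refine ⟨part1, ?_⟩
  -- quotient
  set Q := A ⧸ B with hQ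
  have htor : Monoid.IsTorsion Q := by
    intro q
    induction q using QuotientGroup.induction_on with
    | H x =>
      obtain ⟨m, hm, hxm⟩ := part1 x
      refine isOfFinOrder_iff_pow_eq_one.mpr ⟨m, hm.1, ?_⟩
      rw [← QuotientGroup.mk_pow]
      exact (QuotientGroup.eq_one_iff _).mpr hxm
  have hfg : Group.FG Q := by
    refine Group.fg_iff.mpr ⟨(QuotientGroup.mk' B) '' T, ?_, hT.image _⟩
    have hmap : Subgroup.map (QuotientGroup.mk' B) (Subgroup.closure (T ∪ B)) = ⊤ := by
      rw [hgen, ← MonoidHom.range_eq_map]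
      exact MonoidHom.range_eq_top_of_surjective _ (QuotientGroup.mk'_surjective B)
    rw [MonoidHom.map_closure, Set.image_union] at hmap
    refine top_le_iff.mp ?_
    rw [← hmap]
    refine (Subgroup.closure_le _).2 ?_
    rintro q (hq | ⟨b, hb, rfl⟩)
    · exact Subgroup.subset_closure hq
    · have : (QuotientGroup.mk' B) b = 1 := (QuotientGroup.eq_one_iff _).mpr hb
      rw [this]; exact Subgroup.one_mem _
  have hfin : Finite Q := CommGroup.finite_of_fg_torsion Q htor
  constructor
  · rw [Subgroup.index_eq_card]
    exact Nat.card_pos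
  · intro p hp hdvd
    rw [Subgroup.index_eq_card] at hdvd
    haveI : Fact p.Prime := ⟨hp⟩
    obtain ⟨q, hq⟩ := exists_prime_orderOf_dvd_card' (G := Q) p hdvd
    obtain ⟨x, rfl⟩ := QuotientGroup.mk'_surjective B q
    obtain ⟨m, hm, hxm⟩ := part1 x
    have hqm : ((QuotientGroup.mk' B) x) ^ m = 1 := by
      rw [← map_pow]
      exact (QuotientGroup.eq_one_iff _).mpr hxm
    have : orderOf ((QuotientGroup.mk' B) x) ∣ m := orderOf_dvd_of_pow_eq_one hqm
    rw [hq] at this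
    exact hm.2 p hp this

variable {G : Type*} [Group G]

abbrev lowerCentralSeries (G : Type*) [Group G] (n : ℕ) : Subgroup G :=
  Subgroup.lowerCentralSeries (⊤ : Subgroup G) n

theorem lowerCentralSeries_succ {G : Type*} [Group G] (n : ℕ) :
    lowerCentralSeries G (n + 1) = ⁅lowerCentralSeries G n, ⊤⁆ := rfl

instance lowerCentralSeries_normal {G : Type*} [Group G] (n : ℕ) :
    (lowerCentralSeries G n).Normal :=
  Subgroup.lowerCentralSeries_normal ⊤ n

def commSet (S : Set G) : ℕ → Set G
  | 0 => S
  | (k+1) => Set.image2 (fun a s => ⁅a, s⁆) (commSet S k) S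

theorem commSet_finite {S : Set G} (hS : S.Finite) : ∀ k, (commSet S k).Finite
  | 0 => hS
  | (k+1) => Set.Finite.image2 _ (commSet_finite hS k) hS

theorem commSet_subset_lcs (S : Set G) : ∀ k, commSet S k ⊆ lowerCentralSeries G k
  | 0 => fun x _ => Subgroup.mem_top x
  | (k+1) => by
    rintro x ⟨a, ha, s, hs, rfl⟩
    rw [lowerCentralSeries_succ]
    exact Subgroup.commutator_mem_commutator (commSet_subset_lcs S k ha) (Subgroup.mem_top s)

theorem central_comm_left {z w : G} (h : z ∈ Subgroup.center G) : ⁅z, w⁆ = 1 :=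
  commutatorElement_eq_one_iff_mul_comm.mpr ((Subgroup.mem_center_iff.mp h w).symm)

theorem central_comm_right {z w : G} (h : z ∈ Subgroup.center G) : ⁅w, z⁆ = 1 :=
  commutatorElement_eq_one_iff_mul_comm.mpr (Subgroup.mem_center_iff.mp h w)

theorem comm_mul_left_central {a b w : G} (h : ⁅b, w⁆ ∈ Subgroup.center G) :
    ⁅a * b, w⁆ = ⁅a, w⁆ * ⁅b, w⁆ := by
  have e : ⁅a * b, w⁆ = a * ⁅b, w⁆ * a⁻¹ * ⁅a, w⁆ := by
    simp only [commutatorElement_def]; group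
  rw [e, Subgroup.mem_center_iff.mp h a, Subgroup.mem_center_iff.mp h ⁅a, w⁆]
  group

theorem comm_inv_left_central {a w : G} (h : ⁅a, w⁆ ∈ Subgroup.center G) :
    ⁅a⁻¹, w⁆ = ⁅a, w⁆⁻¹ := by
  have e : ⁅a⁻¹, w⁆ = a⁻¹ * ⁅a, w⁆⁻¹ * a := by
    simp only [commutatorElement_def]; group
  rw [e, Subgroup.mem_center_iff.mp (Subgroup.center G |>.inv_mem h) a⁻¹]
  group

theorem comm_mul_right_central {a w₁ w₂ : G} (h : ⁅a, w₂⁆ ∈ Subgroup.center G) :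
    ⁅a, w₁ * w₂⁆ = ⁅a, w₁⁆ * ⁅a, w₂⁆ := by
  have e : ⁅a, w₁ * w₂⁆ = ⁅a, w₁⁆ * (w₁ * ⁅a, w₂⁆ * w₁⁻¹) := by
    simp only [commutatorElement_def]; group
  rw [e, Subgroup.mem_center_iff.mp h w₁]
  group

theorem comm_inv_right_central {a w : G} (h : ⁅a, w⁆ ∈ Subgroup.center G) :
    ⁅a, w⁻¹⁆ = ⁅a, w⁆⁻¹ := by
  have e : ⁅a, w⁻¹⁆ = w⁻¹ * ⁅a, w⁆⁻¹ * w := by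
    simp only [commutatorElement_def]; group
  rw [e, Subgroup.mem_center_iff.mp (Subgroup.center G |>.inv_mem h) w⁻¹]
  group

theorem comm_pow_right_central {a w : G} (h : ∀ y : G, ⁅a, y⁆ ∈ Subgroup.center G) :
    ∀ m : ℕ, ⁅a, w ^ m⁆ = ⁅a, w⁆ ^ m
  | 0 => by simp [commutatorElement_one_right]
  | (m+1) => by
    rw [pow_succ, comm_mul_right_central (h w), comm_pow_right_central h m, pow_succ]

theorem comm_pow_left_central {K : Subgroup G} {a w : G} (ha : a ∈ K)
    (h : ∀ b ∈ K, ⁅b, w⁆ ∈ Subgroup.center G) :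
    ∀ m : ℕ, ⁅a ^ m, w⁆ = ⁅a, w⁆ ^ m
  | 0 => by simp [commutatorElement_one_left]
  | (m+1) => by
    rw [pow_succ, comm_mul_left_central (h a ha), comm_pow_left_central ha h m, pow_succ]


variable {G : Type*} [Group G]

theorem mk_lcs_central (k : ℕ) {x : G} (hx : x ∈ lowerCentralSeries G (k+1)) :
    (QuotientGroup.mk' (lowerCentralSeries G (k+2)) x) ∈
      Subgroup.center (G ⧸ lowerCentralSeries G (k+2)) := by
  rw [Subgroup.mem_center_iff]
  intro q
  induction q using QuotientGroup.induction_on with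
  | H y =>
    show QuotientGroup.mk (y * x) = QuotientGroup.mk (x * y)
    rw [QuotientGroup.eq]
    have e : (y * x)⁻¹ * (x * y) = ⁅x⁻¹, y⁻¹⁆ := by
      simp only [commutatorElement_def]; group
    rw [e, lowerCentralSeries_succ]
    exact Subgroup.commutator_mem_commutator
      ((lowerCentralSeries G (k+1)).inv_mem hx) (Subgroup.mem_top _)

theorem gen_lemma (S : Set G) (hS : Subgroup.closure S = ⊤) :
    ∀ k, lowerCentralSeries G k ≤
      Subgroup.closure (commSet S k) ⊔ lowerCentralSeries G (k+1)
  | 0 => by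
    rw [show commSet S 0 = S from rfl, hS]
    simp
  | (k+1) => by
    set N := lowerCentralSeries G (k+2) with hN
    letI : N.Normal := lowerCentralSeries_normal (k+2)
    set φ := QuotientGroup.mk' N with hφ
    set M : Subgroup (G ⧸ N) := Subgroup.closure (φ '' commSet S (k+1)) with hM
    have hMc : M ≤ Subgroup.center (G ⧸ N) := by
      rw [hM, Subgroup.closure_le]
      rintro _ ⟨t, ht, rfl⟩
      exact mk_lcs_central k (commSet_subset_lcs S (k+1) ht)
    have hcent1 : ∀ z ∈ lowerCentralSeries G (k+1), φ z ∈ Subgroup.center (G ⧸ N) :=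
      fun z hz => mk_lcs_central k hz
    have key : ∀ a ∈ lowerCentralSeries G k, ∀ b : G, φ ⁅a, b⁆ ∈ M := by
      intro a ha b
      have step1 : ∀ s ∈ S, ∀ a' ∈ lowerCentralSeries G k, φ ⁅a', s⁆ ∈ M := by
        intro s hs
        let As : Subgroup (G ⧸ N) :=
          { carrier := {x | ⁅x, φ s⁆ ∈ M}
            one_mem' := by simp only [Set.mem_setOf_eq, commutatorElement_one_left]; exact M.one_mem
            mul_mem' := by
              intro x y hx hy
              simp only [Set.mem_setOf_eq] at *
              rw [comm_mul_left_central (hMc hy)]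
              exact M.mul_mem hx hy
            inv_mem' := by
              intro x hx
              simp only [Set.mem_setOf_eq] at *
              rw [comm_inv_left_central (hMc hx)]
              exact M.inv_mem hx }
        intro a' ha'
        have hmap : Subgroup.map φ (lowerCentralSeries G k) ≤ As := by
          calc Subgroup.map φ (lowerCentralSeries G k)
              ≤ Subgroup.map φ (Subgroup.closure (commSet S k) ⊔ lowerCentralSeries G (k+1)) :=
                Subgroup.map_mono (gen_lemma S hS k)
            _ = Subgroup.closure (φ '' commSet S k) ⊔
                  Subgroup.map φ (lowerCentralSeries G (k+1)) := by
                rw [Subgroup.map_sup, MonoidHom.map_closure]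
            _ ≤ As := by
                refine sup_le ?_ ?_
                · rw [Subgroup.closure_le]
                  rintro _ ⟨t, ht, rfl⟩
                  show ⁅φ t, φ s⁆ ∈ M
                  rw [← map_commutatorElement]
                  exact Subgroup.subset_closure ⟨⁅t, s⁆, ⟨t, ht, s, hs, rfl⟩, rfl⟩
                · rintro _ ⟨z, hz, rfl⟩
                  show ⁅φ z, φ s⁆ ∈ M
                  rw [central_comm_left (hcent1 z hz)]
                  exact M.one_mem
        exact hmap (Subgroup.mem_map_of_mem φ ha')
      -- second slot
      have hcomm_central : ∀ y : G ⧸ N, ⁅φ a, y⁆ ∈ Subgroup.center (G ⧸ N) := by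
        intro y
        induction y using QuotientGroup.induction_on with
        | H b' =>
          show ⁅φ a, φ b'⁆ ∈ _
          rw [← map_commutatorElement]
          refine hcent1 _ ?_
          rw [lowerCentralSeries_succ]
          exact Subgroup.commutator_mem_commutator ha (Subgroup.mem_top _)
      let Ba : Subgroup (G ⧸ N) :=
        { carrier := {y | ⁅φ a, y⁆ ∈ M}
          one_mem' := by
            simp only [Set.mem_setOf_eq, commutatorElement_one_right]; exact M.one_mem
          mul_mem' := by
            intro x y hx hy
            simp only [Set.mem_setOf_eq] at *
            rw [comm_mul_right_central (hcomm_central y)]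
            exact M.mul_mem hx hy
          inv_mem' := by
            intro x hx
            simp only [Set.mem_setOf_eq] at *
            rw [comm_inv_right_central (hcomm_central x)]
            exact M.inv_mem hx }
      have hBa : (⊤ : Subgroup (G ⧸ N)) ≤ Ba := by
        have : Subgroup.map φ (Subgroup.closure S) ≤ Ba := by
          rw [MonoidHom.map_closure, Subgroup.closure_le]
          rintro _ ⟨s, hs, rfl⟩
          show ⁅φ a, φ s⁆ ∈ M
          have : ⁅a, s⁆⁻¹ = ⁅s, a⁆ := commutatorElement_inv a s ▸ rfl
          -- use step1 with commutator inversion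
          have h1 : φ ⁅a, s⁆ ∈ M := step1 s hs a ha
          rw [← map_commutatorElement]
          exact h1
        rw [hS] at this
        rwa [← Subgroup.map_top_of_surjective φ (QuotientGroup.mk'_surjective N)]
      have : φ b ∈ Ba := hBa (Subgroup.mem_top _)
      show φ ⁅a, b⁆ ∈ M
      rw [map_commutatorElement]
      exact this
    -- conclude
    have hle : ⁅lowerCentralSeries G k, (⊤ : Subgroup G)⁆ ≤
        Subgroup.closure (commSet S (k+1)) ⊔ N := by
      rw [Subgroup.commutator_le]
      intro a ha b _
      have h1 : φ ⁅a, b⁆ ∈ Subgroup.map φ (Subgroup.closure (commSet S (k+1))) := by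
        rw [MonoidHom.map_closure]; exact key a ha b
      have h2 : ⁅a, b⁆ ∈ Subgroup.comap φ (Subgroup.map φ (Subgroup.closure (commSet S (k+1)))) :=
        Subgroup.mem_comap.mpr h1
      rwa [Subgroup.comap_map_eq, QuotientGroup.ker_mk'] at h2
    calc lowerCentralSeries G (k+1) = ⁅lowerCentralSeries G k, ⊤⁆ := lowerCentralSeries_succ k
      _ ≤ _ := hle

theorem pi_dvd' {π : Set ℕ} {a b : ℕ} (hb : IsPiNumber π b) (h : a ∣ b) (ha : 0 < a) :
    IsPiNumber π a :=
  ⟨ha, fun p hp hd => hb.2 p hp (hd.trans h)⟩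

theorem pw_lemma {n : ℕ} (π : Set ℕ) (g : Fin n → G) (H : Subgroup G) (r : Fin n → ℕ)
    (hr : ∀ i, IsPiNumber π (r i)) (hmem : ∀ i, g i ^ (r i) ∈ H) :
    ∀ k, ∀ a ∈ commSet (Set.range g) k,
      ∃ m : ℕ, IsPiNumber π m ∧ a ^ m ∈ H ⊔ lowerCentralSeries G (k+1)
  | 0 => by
    rintro _ ⟨i, rfl⟩
    exact ⟨r i, hr i, Subgroup.mem_sup_left (hmem i)⟩
  | (k+1) => by
    intro x hx
    obtain ⟨a, ha, s, hs, rfl⟩ := hx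
    obtain ⟨j, rfl⟩ := hs
    obtain ⟨m, hm, ham⟩ := pw_lemma π g H r hr hmem k a ha
    set N := lowerCentralSeries G (k+2) with hN
    letI : N.Normal := lowerCentralSeries_normal (k+2)
    set φ := QuotientGroup.mk' N with hφ
    have hcent1 : ∀ z ∈ lowerCentralSeries G (k+1), φ z ∈ Subgroup.center (G ⧸ N) :=
      fun z hz => mk_lcs_central k hz
    have halcs : a ∈ lowerCentralSeries G k := commSet_subset_lcs _ k ha
    have hKcent : ∀ b ∈ Subgroup.map φ (lowerCentralSeries G k), ∀ y : G ⧸ N,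
        ⁅b, y⁆ ∈ Subgroup.center (G ⧸ N) := by
      rintro _ ⟨c, hc, rfl⟩ y
      induction y using QuotientGroup.induction_on with
      | H d =>
        show ⁅φ c, φ d⁆ ∈ _
        rw [← map_commutatorElement]
        refine hcent1 _ ?_
        rw [lowerCentralSeries_succ]
        exact Subgroup.commutator_mem_commutator hc (Subgroup.mem_top _)
    have hφa : φ a ∈ Subgroup.map φ (lowerCentralSeries G k) :=
      Subgroup.mem_map_of_mem φ halcs
    have h1 : ∀ y : G ⧸ N, ⁅φ a, y⁆ ∈ Subgroup.center (G ⧸ N) := hKcent _ hφa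
    -- decompose a ^ m
    have hdecomp : (a ^ m) ∈ (H : Set G) * (lowerCentralSeries G (k+1) : Set G) := by
      rw [← Subgroup.mul_normal H (lowerCentralSeries G (k+1))]
      exact ham
    obtain ⟨h, hh, z, hz, hEq⟩ := hdecomp
    have hφz : φ z ∈ Subgroup.center (G ⧸ N) := hcent1 z hz
    have e1 : φ (⁅a, g j⁆ ^ (m * r j)) = ⁅φ (a ^ m), φ (g j ^ r j)⁆ := by
      rw [map_pow, map_commutatorElement, mul_comm m (r j), pow_mul,
        ← comm_pow_right_central h1 (r j),
        ← comm_pow_left_central hφa (fun b hb => hKcent b hb _) m,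
        ← map_pow, ← map_pow]
    have e2 : ⁅φ (a ^ m), φ (g j ^ r j)⁆ = φ ⁅h, g j ^ r j⁆ := by
      have hc1 : ⁅φ z, φ (g j ^ r j)⁆ ∈ Subgroup.center (G ⧸ N) := by
        rw [central_comm_left hφz]
        exact (Subgroup.center _).one_mem
      rw [← hEq, map_mul, comm_mul_left_central hc1, central_comm_left hφz, mul_one,
        map_commutatorElement]
    have hhH : ⁅h, g j ^ r j⁆ ∈ H := by
      rw [commutatorElement_def]
      exact H.mul_mem (H.mul_mem (H.mul_mem hh (hmem j)) (H.inv_mem hh)) (H.inv_mem (hmem j))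
    refine ⟨m * r j, pi_mul hm (hr j), ?_⟩
    have hmemmap : φ (⁅a, g j⁆ ^ (m * r j)) ∈ Subgroup.map φ H := by
      rw [e1, e2]
      exact Subgroup.mem_map_of_mem φ hhH
    have h2 : ⁅a, g j⁆ ^ (m * r j) ∈ Subgroup.comap φ (Subgroup.map φ H) :=
      Subgroup.mem_comap.mpr hmemmap
    rwa [Subgroup.comap_map_eq, QuotientGroup.ker_mk'] at h2


theorem lcs_le_map_surjective {G' H' : Type*} [Group G'] [Group H'] (f : G' →* H')
    (hf : Function.Surjective f) :
    ∀ k, lowerCentralSeries H' k ≤ Subgroup.map f (lowerCentralSeries G' k)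
  | 0 => by
    rw [show lowerCentralSeries G' 0 = ⊤ from rfl,
      Subgroup.map_top_of_surjective f hf]
    exact le_top
  | (k+1) => by
    calc lowerCentralSeries H' (k+1) = ⁅lowerCentralSeries H' k, ⊤⁆ := lowerCentralSeries_succ k
      _ ≤ ⁅Subgroup.map f (lowerCentralSeries G' k), Subgroup.map f ⊤⁆ := by
          refine Subgroup.commutator_mono (lcs_le_map_surjective f hf k) ?_
          rw [Subgroup.map_top_of_surjective f hf]
      _ = Subgroup.map f ⁅lowerCentralSeries G' k, ⊤⁆ :=
          (Subgroup.map_commutator _ _ f).symm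
      _ = Subgroup.map f (lowerCentralSeries G' (k+1)) :=
          (congrArg (Subgroup.map f) (lowerCentralSeries_succ k)).symm

universe u

theorem main_aux : ∀ (c : ℕ) (G : Type u) [Group G],
    lowerCentralSeries G c = ⊥ → ∀ (π : Set ℕ) (n : ℕ) (g : Fin n → G),
    Subgroup.closure (Set.range g) = ⊤ → ∀ (H : Subgroup G) (r : Fin n → ℕ),
    (∀ i, IsPiNumber π (r i)) → (∀ i, g i ^ (r i) ∈ H) →
    (∀ x : G, ∃ m : ℕ, IsPiNumber π m ∧ x ^ m ∈ H) ∧ IsPiNumber π H.index := by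
  intro c
  induction c with
  | zero =>
    intro G _ hG π n g hgen H r hr hmem
    have hH : H = ⊤ := by
      rw [eq_top_iff]
      intro x _
      have hx : x ∈ (⊥ : Subgroup G) := hG ▸ Subgroup.mem_top x
      rw [Subgroup.mem_bot] at hx
      rw [hx]
      exact H.one_mem
    constructor
    · intro x
      refine ⟨1, pi_one π, ?_⟩
      rw [hH]; exact Subgroup.mem_top _
    · rw [hH, Subgroup.index_top]
      exact pi_one π
  | succ c ih =>
    intro G _ hG π n g hgen H r hr hmem
    set C := lowerCentralSeries G c with hCdef
    letI : C.Normal := lowerCentralSeries_normal c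
    set φ := QuotientGroup.mk' C with hφ
    -- C is central
    have hC_central : ∀ z ∈ C, z ∈ Subgroup.center G := by
      intro z hz
      rw [Subgroup.mem_center_iff]
      intro y
      have h1 : ⁅z, y⁆ ∈ lowerCentralSeries G (c+1) := by
        rw [lowerCentralSeries_succ]
        exact Subgroup.commutator_mem_commutator hz (Subgroup.mem_top y)
      rw [hG, Subgroup.mem_bot, commutatorElement_eq_one_iff_mul_comm] at h1
      exact h1.symm
    -- quotient has smaller class
    have hQ : lowerCentralSeries (G ⧸ C) c = ⊥ := by
      rw [eq_bot_iff]
      refine le_trans (lcs_le_map_surjective φ (QuotientGroup.mk'_surjective C) c) ?_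
      rintro _ ⟨z, hz, rfl⟩
      rw [Subgroup.mem_bot]
      exact (QuotientGroup.eq_one_iff z).mpr hz
    -- apply induction hypothesis in the quotient
    have hgenQ : Subgroup.closure (Set.range (φ ∘ g)) = ⊤ := by
      rw [Set.range_comp, ← MonoidHom.map_closure, hgen]
      exact Subgroup.map_top_of_surjective φ (QuotientGroup.mk'_surjective C)
    obtain ⟨hbar1, hbar2⟩ := ih (G ⧸ C) hQ π n (φ ∘ g) hgenQ (H.map φ) r hr
      (fun i => by
        show φ (g i) ^ r i ∈ H.map φ
        rw [← map_pow]
        exact Subgroup.mem_map_of_mem φ (hmem i))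
    set HC := H ⊔ C with hHCdef
    have hcomap : Subgroup.comap φ (Subgroup.map φ H) = HC := by
      rw [Subgroup.comap_map_eq, QuotientGroup.ker_mk']
    have hHCindex : IsPiNumber π HC.index := by
      rw [← hcomap, Subgroup.index_comap_of_surjective _ (QuotientGroup.mk'_surjective C)]
      exact hbar2
    -- abelian part on C
    letI : CommGroup ↥C :=
      { (inferInstance : Group ↥C) with
        mul_comm := fun x y => Subtype.ext
          (Subgroup.mem_center_iff.mp (hC_central ↑y y.2) ↑x) }
    set B := H.subgroupOf C with hBdef
    set T' : Set ↥C := ((↑) : ↥C → G) ⁻¹' (commSet (Set.range g) c) with hT'def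
    have hT'fin : T'.Finite :=
      Set.Finite.preimage Subtype.coe_injective.injOn
        (commSet_finite (Set.finite_range g) c)
    have hcommsub : commSet (Set.range g) c ⊆ (C : Set G) := commSet_subset_lcs _ c
    have hclosC : Subgroup.closure (commSet (Set.range g) c) = C := by
      apply le_antisymm
      · rw [Subgroup.closure_le]; exact hcommsub
      · have := gen_lemma (Set.range g) hgen c
        rwa [hG, sup_bot_eq] at this
    have hpowC : ∀ t ∈ T', ∃ m : ℕ, IsPiNumber π m ∧ t ^ m ∈ B := by
      intro t ht
      obtain ⟨m, hm, htm⟩ := pw_lemma π g H r hr hmem c ↑t ht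
      rw [hG, sup_bot_eq] at htm
      refine ⟨m, hm, ?_⟩
      rw [Subgroup.mem_subgroupOf]
      push_cast
      exact htm
    have hgenC : Subgroup.closure (T' ∪ B) = ⊤ := by
      apply Subgroup.map_injective C.subtype_injective
      rw [MonoidHom.map_closure, ← MonoidHom.range_eq_map, Subgroup.range_subtype,
        Set.image_union]
      have h1 : C.subtype '' T' = commSet (Set.range g) c := by
        rw [Subgroup.coe_subtype]
        exact Set.image_preimage_eq_of_subset (by rwa [Subtype.range_coe_subtype])
      have h2 : C.subtype '' (B : Set ↥C) ⊆ (C : Set G) := by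
        rintro _ ⟨b, _, rfl⟩
        exact b.2
      apply le_antisymm
      · rw [Subgroup.closure_le]
        refine Set.union_subset ?_ h2
        rw [h1]; exact hcommsub
      · conv_lhs => rw [← hclosC]
        apply Subgroup.closure_mono
        rw [h1]; exact Set.subset_union_left
    obtain ⟨part1C, part2C⟩ := abelian_case π B T' hT'fin hpowC hgenC
    -- transfer index of B to relindex of H in HC
    haveI hnormal : (H.subgroupOf HC).Normal := by
      constructor
      rintro ⟨x, hxHC⟩ hxH ⟨y, hyHC⟩
      have hy' : y ∈ (H : Set G) * (C : Set G) := by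
        rw [← Subgroup.mul_normal H C]; exact hyHC
      obtain ⟨u, hu, v, hv, rfl⟩ := hy'
      rw [Subgroup.mem_subgroupOf] at hxH ⊢
      show (u * v) * x * (u * v)⁻¹ ∈ H
      have hvc := Subgroup.mem_center_iff.mp (hC_central v hv)
      have : (u * v) * x * (u * v)⁻¹ = u * x * u⁻¹ := by
        rw [mul_inv_rev]
        calc u * v * x * (v⁻¹ * u⁻¹) = u * (v * x * v⁻¹) * u⁻¹ := by group
          _ = u * (x * v * v⁻¹) * u⁻¹ := by rw [hvc x]
          _ = u * x * u⁻¹ := by group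
      rw [this]
      exact H.mul_mem (H.mul_mem hu hxH) (H.inv_mem hu)
    have hrelindex : H.relIndex HC = B.index := by
      set φ2 : ↥C →* HC ⧸ (H.subgroupOf HC) :=
        (QuotientGroup.mk' (H.subgroupOf HC)).comp
          (Subgroup.inclusion (le_sup_right : C ≤ H ⊔ C)) with hφ2
      have hker : φ2.ker = B := by
        ext t
        rw [MonoidHom.mem_ker, hφ2, MonoidHom.comp_apply, QuotientGroup.mk'_apply,
          QuotientGroup.eq_one_iff, Subgroup.mem_subgroupOf, Subgroup.coe_inclusion,
          hBdef, Subgroup.mem_subgroupOf]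
      have hsurj : Function.Surjective φ2 := by
        intro q
        induction q using QuotientGroup.induction_on with
        | H w =>
          have hw : (w : G) ∈ (H : Set G) * (C : Set G) := by
            rw [← Subgroup.mul_normal H C]; exact w.2
          obtain ⟨u, hu, v, hv, huv⟩ := hw
          refine ⟨⟨v, hv⟩, ?_⟩
          rw [hφ2, MonoidHom.comp_apply, QuotientGroup.mk'_apply, QuotientGroup.eq]
          rw [Subgroup.mem_subgroupOf]
          have hvc := Subgroup.mem_center_iff.mp (hC_central v hv)
          show ((Subgroup.inclusion _ ⟨v, hv⟩ : ↥HC) : G)⁻¹ * (w : G) ∈ H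
          rw [Subgroup.coe_inclusion]
          show v⁻¹ * (w : G) ∈ H
          rw [← huv]
          have : v⁻¹ * (u * v) = u := by rw [hvc u]; group
          rw [this]
          exact hu
      have he : (↥C ⧸ φ2.ker) ≃* (↥HC ⧸ H.subgroupOf HC) :=
        QuotientGroup.quotientKerEquivOfSurjective φ2 hsurj
      rw [← hker, Subgroup.relIndex, Subgroup.index_eq_card, Subgroup.index_eq_card]
      exact (Nat.card_congr he.toEquiv).symm
    have hfinal := Subgroup.relIndex_mul_index (le_sup_left : H ≤ HC)
    constructor
    · intro x
      obtain ⟨m, hm, hxm⟩ := hbar1 (φ x)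
      have hx1 : x ^ m ∈ HC := by
        rw [← hcomap]
        rw [Subgroup.mem_comap, map_pow]
        exact hxm
      have hx2 : x ^ m ∈ (H : Set G) * (C : Set G) := by
        rw [← Subgroup.mul_normal H C]; exact hx1
      obtain ⟨u, hu, v, hv, huv⟩ := hx2
      obtain ⟨k, hk, hvk⟩ := part1C ⟨v, hv⟩
      rw [Subgroup.mem_subgroupOf] at hvk
      refine ⟨m * k, pi_mul hm hk, ?_⟩
      have hcomm : Commute u v := Subgroup.mem_center_iff.mp (hC_central v hv) u
      rw [pow_mul, ← huv, hcomm.mul_pow]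
      push_cast at hvk
      exact H.mul_mem (H.pow_mem hu k) hvk
    · rw [← hfinal]
      exact pi_mul (hrelindex ▸ part2C) hHCindex

end PiAux

theorem pi_power_in_subgroup_and_index_pi (G : Type*) [Group G] [Group.IsNilpotent G]
    (π : Set ℕ) (n : ℕ) (g : Fin n → G) (hgen : Subgroup.closure (Set.range g) = ⊤)
    (H : Subgroup G) (r : Fin n → ℕ) (hr : ∀ i, IsPiNumber π (r i))
    (hmem : ∀ i, g i ^ (r i) ∈ H) :
    (∀ x : G, ∃ m : ℕ, IsPiNumber π m ∧ x ^ m ∈ H) ∧ IsPiNumber π H.index := by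
  obtain ⟨c, hc⟩ := nilpotent_iff_lowerCentralSeries.mp ‹Group.IsNilpotent G›
  exact PiAux.main_aux c G hc π n g hgen H r hr hmem
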